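/- Let φ1, φ2, X1, X2 be positive reals and β ∈ (0,1]. Define U1(τ) = (1/2)·φ1·(X1 − τ) + (1/2)·√( φ1·φ2·(X1 − τ)·(X2 + β·τ) ) on (−X2/β, X1). Then the derivative of U1 at τ = 0 is strictly positive if and only if 2·√(φ1·X1·X2/φ2) < β·X1 − X2. -/

import Mathlib

noncomputable section

/-- In Case 3, Player 1's payoff has strictly positive derivative at `τ = 0`
iff `2√(φ1X1X2/φ2) < βX1 − X2`. -/
theorem case3_payoff1_deriv_pos_iff (φ1 φ2 X1 X2 β : ℝ)
    (hφ1 : 0 < φ1) (hφ2 : 0 < φ2) (hX1 : 0 < X1) (hX2 : 0 < X2)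
    (hβ0 : 0 < β) (hβ1 : β ≤ 1) :
    0 < deriv (fun τ : ℝ => (1 / 2) * φ1 * (X1 - τ) +
        (1 / 2) * Real.sqrt (φ1 * φ2 * (X1 - τ) * (X2 + β * τ))) 0 ↔
      2 * Real.sqrt (φ1 * X1 * X2 / φ2) < β * X1 - X2 := by
  set s := Real.sqrt (φ1 * φ2 * X1 * X2) with hs
  have hprodpos : 0 < φ1 * φ2 * X1 * X2 := by positivity
  have hspos : 0 < s := Real.sqrt_pos.mpr hprodpos
  have hssq : s ^ 2 = φ1 * φ2 * X1 * X2 := Real.sq_sqrt hprodpos.le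
  -- inner function derivative
  have hg : HasDerivAt (fun τ : ℝ => φ1 * φ2 * (X1 - τ) * (X2 + β * τ))
      (φ1 * φ2 * (β * X1 - X2)) 0 := by
    have h1 : HasDerivAt (fun τ : ℝ => φ1 * φ2 * (X1 - τ)) (-(φ1 * φ2)) 0 := by
      have := ((hasDerivAt_id (0:ℝ)).const_sub X1).const_mul (φ1 * φ2)
      simpa using this
    have h2 : HasDerivAt (fun τ : ℝ => X2 + β * τ) β 0 := by
      have := ((hasDerivAt_id (0:ℝ)).const_mul β).const_add X2
      simpa using this
    have := h1.mul h2
    exact this.congr_deriv (by ring)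
  have hg0 : (fun τ : ℝ => φ1 * φ2 * (X1 - τ) * (X2 + β * τ)) 0 = φ1 * φ2 * X1 * X2 := by
    norm_num
  have hsqrt : HasDerivAt (fun τ : ℝ =>
      Real.sqrt (φ1 * φ2 * (X1 - τ) * (X2 + β * τ)))
      (φ1 * φ2 * (β * X1 - X2) / (2 * s)) 0 := by
    have hne : (fun τ : ℝ => φ1 * φ2 * (X1 - τ) * (X2 + β * τ)) 0 ≠ 0 := by
      rw [hg0]; exact hprodpos.ne'
    have := (Real.hasDerivAt_sqrt hne).comp 0 hg
    exact this.congr_deriv (by simp only [hg0, ← hs]; field_simp)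
  have hlin : HasDerivAt (fun τ : ℝ => (1 / 2) * φ1 * (X1 - τ)) (-((1/2) * φ1)) 0 := by
    have := ((hasDerivAt_id (0:ℝ)).const_sub X1).const_mul ((1/2) * φ1)
    simpa using this
  have hf : HasDerivAt (fun τ : ℝ => (1 / 2) * φ1 * (X1 - τ) +
      (1 / 2) * Real.sqrt (φ1 * φ2 * (X1 - τ) * (X2 + β * τ)))
      (-((1/2) * φ1) + (1/2) * (φ1 * φ2 * (β * X1 - X2) / (2 * s))) 0 :=
    hlin.add (hsqrt.const_mul (1/2))
  rw [hf.deriv]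
  -- rewrite RHS sqrt
  have hR : Real.sqrt (φ1 * X1 * X2 / φ2) = s / φ2 := by
    have : φ1 * X1 * X2 / φ2 = (s / φ2) ^ 2 := by
      rw [div_pow, hssq]; field_simp
    rw [this, Real.sqrt_sq (by positivity)]
  rw [hR]
  rw [show (-((1/2) * φ1) + (1/2) * (φ1 * φ2 * (β * X1 - X2) / (2 * s)))
      = (φ1 * φ2 * (β * X1 - X2) - 2 * φ1 * s) / (4 * s) from by
    field_simp
    ring]
  rw [lt_div_iff₀ (by positivity : (0:ℝ) < 4 * s), zero_mul]
  constructor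
  · intro h
    rw [show 2 * (s / φ2) = 2 * s / φ2 by ring, div_lt_iff₀ hφ2]
    nlinarith
  · intro h
    rw [show 2 * (s / φ2) = 2 * s / φ2 by ring, div_lt_iff₀ hφ2] at h
    nlinarith
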